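/- Let R be a commutative ring and let D_n : R[X] → R[X] denote the n-th Hasse derivative. Let f, c ∈ R[X] and let m ≥ n ≥ 0 be integers. Then f^{m−n} divides D_n(c·f^m) in R[X]. -/

import Mathlib

open Polynomial

private lemma key_hd {R : Type*} [CommRing R] (f : R[X]) :
    ∀ m n : ℕ, f ^ (m - n) ∣ hasseDeriv n (f ^ m) := by
  intro m
  induction m with
  | zero =>
    intro n
    simp only [Nat.zero_sub, pow_zero]
    exact one_dvd _
  | succ m ih =>
    intro n
    rw [pow_succ, mul_comm, hasseDeriv_mul]
    refine Finset.dvd_sum ?_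
    rintro ⟨i, j⟩ hij
    rw [Finset.HasAntidiagonal.mem_antidiagonal] at hij
    rcases Nat.eq_zero_or_pos i with hi | hi
    · subst hi
      have hn : j = n := by omega
      subst hn
      rw [hasseDeriv_zero']
      have h1 : f ^ (m + 1 - j) ∣ f ^ ((m - j) + 1) :=
        pow_dvd_pow f (by omega)
      calc f ^ (m + 1 - j) ∣ f ^ ((m - j) + 1) := h1
        _ = f * f ^ (m - j) := by ring
        _ ∣ f * hasseDeriv j (f ^ m) := mul_dvd_mul_left f (ih j)
    · have hj : j ≤ n - 1 := by omega
      have h1 : f ^ (m + 1 - n) ∣ f ^ (m - j) := pow_dvd_pow f (by omega)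
      exact (h1.trans (ih j)).mul_left _

/-- `f^{m−n}` divides the `n`-th Hasse derivative of `c·f^m`. -/
theorem stmt_11 (R : Type*) [CommRing R] (f c : R[X]) (n m : ℕ) (h : n ≤ m) :
    f ^ (m - n) ∣ hasseDeriv n (c * f ^ m) := by
  rw [hasseDeriv_mul]
  refine Finset.dvd_sum ?_
  rintro ⟨i, j⟩ hij
  rw [Finset.HasAntidiagonal.mem_antidiagonal] at hij
  exact ((pow_dvd_pow f (by omega : m - n ≤ m - j)).trans (key_hd f m j)).mul_left _
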